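/- (Consistency of curvature terms) With the KFAC recursion's N̂_i = K_0^T U_i K_0 + λ K_0^T K_0 − I and the IKFAC recursion's N_i = K_i^T U_i K_i + λ K_i^T K_i − I, where both use the same initialization K_0 and the same symmetric curvature matrices U_i, one has N_i = N̂_i + O(β) for every fixed i. -/

import Mathlib

open Matrix
open scoped NNReal

attribute [local instance] Matrix.linftyOpNormedAddCommGroup Matrix.linftyOpNormedRing
  Matrix.linftyOpNormedAlgebra

private lemma entry_nnnorm_le {n : ℕ} (A : Matrix (Fin n) (Fin n) ℝ) (i j : Fin n) :
    ‖A i j‖₊ ≤ ‖A‖₊ := by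
  calc ‖A i j‖₊ ≤ ∑ j', ‖A i j'‖₊ :=
        Finset.single_le_sum (f := fun j' => ‖A i j'‖₊) (fun _ _ => zero_le)
          (Finset.mem_univ j)
    _ ≤ ‖A‖₊ := by
        rw [Matrix.linfty_opNNNorm_def]
        exact Finset.le_sup (f := fun i' => ∑ j', ‖A i' j'‖₊) (Finset.mem_univ i)

private lemma norm_transpose_le {n : ℕ} (A : Matrix (Fin n) (Fin n) ℝ) :
    ‖Aᵀ‖ ≤ (n : ℝ) * ‖A‖ := by
  have h : ‖Aᵀ‖₊ ≤ (n : ℝ≥0) * ‖A‖₊ := by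
    rw [Matrix.linfty_opNNNorm_def]
    apply Finset.sup_le
    intro j _
    calc ∑ i, ‖Aᵀ j i‖₊ ≤ ∑ _i : Fin n, ‖A‖₊ := by
          refine Finset.sum_le_sum fun i _ => ?_
          exact entry_nnnorm_le A i j
      _ = (n : ℝ≥0) * ‖A‖₊ := by simp [mul_comm]
  calc ‖Aᵀ‖ = ((‖Aᵀ‖₊ : ℝ≥0) : ℝ) := rfl
    _ ≤ (((n : ℝ≥0) * ‖A‖₊ : ℝ≥0) : ℝ) := by exact_mod_cast h
    _ = (n : ℝ) * ‖A‖ := by push_cast; rfl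

/-- Consistency of curvature terms: `N_i = N̂_i + O(β)` for every fixed `i`. -/
theorem ikfac_kfac_curvature_consistency (n : ℕ) (K₀ : Matrix (Fin n) (Fin n) ℝ)
    (hK₀ : IsUnit K₀.det)
    (U : ℕ → Matrix (Fin n) (Fin n) ℝ) (hU : ∀ i, (U i)ᵀ = U i) (lam : ℝ) (hlam : 0 ≤ lam)
    (K : ℝ → ℕ → Matrix (Fin n) (Fin n) ℝ)
    (N : ℝ → ℕ → Matrix (Fin n) (Fin n) ℝ)
    (Nhat : ℕ → Matrix (Fin n) (Fin n) ℝ)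
    (hK0 : ∀ β, K β 0 = K₀)
    (hN : ∀ β i, N β i = (K β i)ᵀ * U i * K β i + lam • ((K β i)ᵀ * K β i) - 1)
    (hKrec : ∀ β t, K β (t + 1) = K β t * (1 - (β / 2) • N β t))
    (hNhat : ∀ i, Nhat i = K₀ᵀ * U i * K₀ + lam • (K₀ᵀ * K₀) - 1) :
    ∀ i : ℕ, ∃ C : ℝ, ∃ δ > (0 : ℝ), ∀ β : ℝ, |β| < δ →
      ‖N β i - Nhat i‖ ≤ C * |β| := by
  -- Step 1: bound K β i - K₀ by O(β)
  have key : ∀ i : ℕ, ∃ C : ℝ, 0 ≤ C ∧ ∃ δ > (0 : ℝ), ∀ β : ℝ, |β| < δ →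
      ‖K β i - K₀‖ ≤ C * |β| := by
    intro i
    induction i with
    | zero =>
      exact ⟨0, le_refl 0, 1, one_pos, fun β _ => by simp [hK0]⟩
    | succ t ih =>
      obtain ⟨C, hC, δ, hδ, hbound⟩ := ih
      -- shrink δ so that C * |β| ≤ 1
      set δ' : ℝ := min δ (1 / (C + 1)) with hδ'def
      have hδ'pos : 0 < δ' := lt_min hδ (by positivity)
      have hKle : ∀ β : ℝ, |β| < δ' → ‖K β t‖ ≤ ‖K₀‖ + 1 := by
        intro β hβ
        have h1 : ‖K β t - K₀‖ ≤ C * |β| := hbound β (lt_of_lt_of_le hβ (min_le_left _ _))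
        have h2 : C * |β| ≤ 1 := by
          have : |β| ≤ 1 / (C + 1) := le_of_lt (lt_of_lt_of_le hβ (min_le_right _ _))
          calc C * |β| ≤ C * (1 / (C + 1)) := mul_le_mul_of_nonneg_left this hC
            _ ≤ 1 := by
                rw [mul_one_div, div_le_one (by positivity)]
                linarith
        calc ‖K β t‖ = ‖K₀ + (K β t - K₀)‖ := by rw [add_sub_cancel]
          _ ≤ ‖K₀‖ + ‖K β t - K₀‖ := norm_add_le _ _
          _ ≤ ‖K₀‖ + 1 := by linarith
      -- bound on N β t
      set M : ℝ := ‖K₀‖ + 1 with hM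
      have hM0 : 0 ≤ M := le_trans (norm_nonneg _) (by linarith)
      set M' : ℝ := n * M * ‖U t‖ * M + lam * (n * M * M) + ‖(1 : Matrix (Fin n) (Fin n) ℝ)‖
        with hM'
      have hNle : ∀ β : ℝ, |β| < δ' → ‖N β t‖ ≤ M' := by
        intro β hβ
        have hK := hKle β hβ
        have hKT : ‖(K β t)ᵀ‖ ≤ n * M := by
          calc ‖(K β t)ᵀ‖ ≤ n * ‖K β t‖ := norm_transpose_le _
            _ ≤ n * M := by
                exact mul_le_mul_of_nonneg_left hK (Nat.cast_nonneg n)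
        rw [hN]
        calc ‖(K β t)ᵀ * U t * K β t + lam • ((K β t)ᵀ * K β t) - 1‖
            ≤ ‖(K β t)ᵀ * U t * K β t‖ + ‖lam • ((K β t)ᵀ * K β t)‖
              + ‖(1 : Matrix (Fin n) (Fin n) ℝ)‖ := by
              refine le_trans (norm_sub_le _ _) ?_
              gcongr
              exact norm_add_le _ _
          _ ≤ n * M * ‖U t‖ * M + lam * (n * M * M)
              + ‖(1 : Matrix (Fin n) (Fin n) ℝ)‖ := by
              gcongr ?_ + ?_ + _
              · calc ‖(K β t)ᵀ * U t * K β t‖ ≤ ‖(K β t)ᵀ * U t‖ * ‖K β t‖ := norm_mul_le _ _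
                  _ ≤ (‖(K β t)ᵀ‖ * ‖U t‖) * ‖K β t‖ := by
                      gcongr; exact norm_mul_le _ _
                  _ ≤ (n * M * ‖U t‖) * M := by
                      gcongr
              · rw [norm_smul, Real.norm_eq_abs, abs_of_nonneg hlam]
                gcongr
                calc ‖(K β t)ᵀ * K β t‖ ≤ ‖(K β t)ᵀ‖ * ‖K β t‖ := norm_mul_le _ _
                  _ ≤ n * M * M := by gcongr
          _ = M' := rfl
      refine ⟨C + M * M' / 2, ?_, δ', hδ'pos, ?_⟩
      · have hM'0 : 0 ≤ M' := by
          have := hNle 0 (by simpa using hδ'pos)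
          exact le_trans (norm_nonneg _) this
        positivity
      intro β hβ
      have hrec := hKrec β t
      have hΔ : K β (t + 1) - K₀ = (K β t - K₀) - (β / 2) • (K β t * N β t) := by
        rw [hrec, Matrix.mul_sub, mul_one, Matrix.mul_smul]
        abel
      rw [hΔ]
      have hM'0 : 0 ≤ M' := le_trans (norm_nonneg _) (hNle β hβ)
      calc ‖(K β t - K₀) - (β / 2) • (K β t * N β t)‖
          ≤ ‖K β t - K₀‖ + ‖(β / 2) • (K β t * N β t)‖ := norm_sub_le _ _
        _ ≤ C * |β| + |β / 2| * (M * M') := by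
            gcongr
            · exact hbound β (lt_of_lt_of_le hβ (min_le_left _ _))
            · rw [norm_smul, Real.norm_eq_abs]
              gcongr
              calc ‖K β t * N β t‖ ≤ ‖K β t‖ * ‖N β t‖ := norm_mul_le _ _
                _ ≤ M * M' := by
                    gcongr
                    · exact hKle β hβ
                    · exact hNle β hβ
        _ = (C + M * M' / 2) * |β| := by
            rw [abs_div]
            simp [abs_of_nonneg]
            ring
  intro i
  obtain ⟨C, hC, δ, hδ, hbound⟩ := key i
  -- shrink δ so that K is bounded
  set δ' : ℝ := min δ (1 / (C + 1)) with hδ'def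
  have hδ'pos : 0 < δ' := lt_min hδ (by positivity)
  set M : ℝ := ‖K₀‖ + 1 with hM
  have hKle : ∀ β : ℝ, |β| < δ' → ‖K β i‖ ≤ M := by
    intro β hβ
    have h1 : ‖K β i - K₀‖ ≤ C * |β| := hbound β (lt_of_lt_of_le hβ (min_le_left _ _))
    have h2 : C * |β| ≤ 1 := by
      have hb : |β| ≤ 1 / (C + 1) := le_of_lt (lt_of_lt_of_le hβ (min_le_right _ _))
      calc C * |β| ≤ C * (1 / (C + 1)) := mul_le_mul_of_nonneg_left hb hC
        _ ≤ 1 := by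
            rw [mul_one_div, div_le_one (by positivity)]
            linarith
    calc ‖K β i‖ = ‖K₀ + (K β i - K₀)‖ := by rw [add_sub_cancel]
      _ ≤ ‖K₀‖ + ‖K β i - K₀‖ := norm_add_le _ _
      _ ≤ ‖K₀‖ + 1 := by linarith
  refine ⟨(n * C) * ‖U i‖ * M + (n * ‖K₀‖) * ‖U i‖ * C
    + lam * ((n * C) * M + (n * ‖K₀‖) * C), δ', hδ'pos, ?_⟩
  intro β hβ
  set A := K β i with hA
  set Δ := A - K₀ with hΔdef
  have hΔ : ‖Δ‖ ≤ C * |β| := hbound β (lt_of_lt_of_le hβ (min_le_left _ _))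
  have hdecomp : N β i - Nhat i
      = (Δᵀ * U i * A + K₀ᵀ * U i * Δ) + lam • (Δᵀ * A + K₀ᵀ * Δ) := by
    rw [hN, hNhat, hΔdef]
    simp only [Matrix.transpose_sub, Matrix.sub_mul, Matrix.mul_sub, smul_sub, smul_add,
      Matrix.add_mul]
    abel
  rw [hdecomp]
  have hΔT : ‖Δᵀ‖ ≤ n * (C * |β|) := by
    calc ‖Δᵀ‖ ≤ n * ‖Δ‖ := norm_transpose_le _
      _ ≤ n * (C * |β|) := by gcongr
  have hK0T : ‖K₀ᵀ‖ ≤ n * ‖K₀‖ := norm_transpose_le _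
  have hKA : ‖A‖ ≤ M := hKle β hβ
  have t1 : ‖Δᵀ * U i * A‖ ≤ (n * (C * |β|)) * ‖U i‖ * M := by
    calc ‖Δᵀ * U i * A‖ ≤ ‖Δᵀ * U i‖ * ‖A‖ := norm_mul_le _ _
      _ ≤ (‖Δᵀ‖ * ‖U i‖) * ‖A‖ := by gcongr; exact norm_mul_le _ _
      _ ≤ (n * (C * |β|)) * ‖U i‖ * M := by gcongr
  have t2 : ‖K₀ᵀ * U i * Δ‖ ≤ (n * ‖K₀‖) * ‖U i‖ * (C * |β|) := by
    calc ‖K₀ᵀ * U i * Δ‖ ≤ ‖K₀ᵀ * U i‖ * ‖Δ‖ := norm_mul_le _ _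
      _ ≤ (‖K₀ᵀ‖ * ‖U i‖) * ‖Δ‖ := by gcongr; exact norm_mul_le _ _
      _ ≤ (n * ‖K₀‖) * ‖U i‖ * (C * |β|) := by gcongr
  have t3 : ‖Δᵀ * A‖ ≤ (n * (C * |β|)) * M := by
    calc ‖Δᵀ * A‖ ≤ ‖Δᵀ‖ * ‖A‖ := norm_mul_le _ _
      _ ≤ (n * (C * |β|)) * M := by gcongr
  have t4 : ‖K₀ᵀ * Δ‖ ≤ (n * ‖K₀‖) * (C * |β|) := by
    calc ‖K₀ᵀ * Δ‖ ≤ ‖K₀ᵀ‖ * ‖Δ‖ := norm_mul_le _ _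
      _ ≤ (n * ‖K₀‖) * (C * |β|) := by gcongr
  calc ‖(Δᵀ * U i * A + K₀ᵀ * U i * Δ) + lam • (Δᵀ * A + K₀ᵀ * Δ)‖
      ≤ ‖Δᵀ * U i * A + K₀ᵀ * U i * Δ‖ + ‖lam • (Δᵀ * A + K₀ᵀ * Δ)‖ := norm_add_le _ _
    _ ≤ (‖Δᵀ * U i * A‖ + ‖K₀ᵀ * U i * Δ‖) + lam * (‖Δᵀ * A‖ + ‖K₀ᵀ * Δ‖) := by
        gcongr
        · exact norm_add_le _ _
        · rw [norm_smul, Real.norm_eq_abs, abs_of_nonneg hlam]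
          gcongr
          exact norm_add_le _ _
    _ ≤ ((n * (C * |β|)) * ‖U i‖ * M + (n * ‖K₀‖) * ‖U i‖ * (C * |β|))
        + lam * ((n * (C * |β|)) * M + (n * ‖K₀‖) * (C * |β|)) := by
        gcongr
    _ = ((n * C) * ‖U i‖ * M + (n * ‖K₀‖) * ‖U i‖ * C
        + lam * ((n * C) * M + (n * ‖K₀‖) * C)) * |β| := by ring
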